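/- Let (a_i), (b_i) be finitely supported sequences of integers, q_i = a_i - b_i, and suppose q is not identically zero with lowest nonzero term q_σ t^σ. Then the following two sets of conditions are equivalent: (1) a_l = 0 for l < σ; a_σ = q_σ > 0; and max(q_l, 0) ≤ a_l < ∑_{i≤l} q_i for l > σ. (2) all a_i, b_i are nonnegative; letting τ be the lowest index with a_τ ≠ 0, b_i = 0 for i ≤ τ; and ∑_{i≤l} b_i < ∑_{i<l} a_i for l > τ. -/
import Mathlib

open Function

private lemma if_support_subset (f : ℤ → ℤ) (P : ℤ → Prop) [DecidablePred P] :
    support (fun i => if P i then f i else 0) ⊆ support f := by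
  intro i hi
  simp only [mem_support, ne_eq] at hi ⊢
  intro h
  apply hi
  simp [h]

private lemma finsum_le_eq (f : ℤ → ℤ) (hf : (support f).Finite) (l : ℤ) :
    ∑ᶠ i : ℤ, (if i ≤ l then f i else 0)
      = (∑ᶠ i : ℤ, (if i < l then f i else 0)) + f l := by
  classical
  set T : Finset ℤ := insert l hf.toFinset with hT
  have hTc : support f ⊆ (T : Set ℤ) := by
    intro x hx
    simp [hT, Set.Finite.mem_toFinset, hx]
  have h1 : support (fun i => if i ≤ l then f i else 0) ⊆ (T : Set ℤ) :=
    (if_support_subset f _).trans hTc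
  have h2 : support (fun i => if i < l then f i else 0) ⊆ (T : Set ℤ) :=
    (if_support_subset f _).trans hTc
  rw [finsum_eq_finset_sum_of_support_subset _ h1,
      finsum_eq_finset_sum_of_support_subset _ h2]
  have key : ∀ i : ℤ, (if i ≤ l then f i else 0)
      = (if i < l then f i else 0) + (if i = l then f i else 0) := by
    intro i
    rcases lt_trichotomy i l with h | h | h
    · simp [h, le_of_lt h, ne_of_lt h]
    · simp [h]
    · simp [h.ne', not_le.mpr h, not_lt.mpr h.le]
  simp_rw [key]
  rw [Finset.sum_add_distrib, Finset.sum_ite_eq' T l f]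
  simp [hT]

private lemma finsum_le_sub (a b : ℤ → ℤ) (ha : (support a).Finite)
    (hb : (support b).Finite) (l : ℤ) :
    ∑ᶠ i : ℤ, (if i ≤ l then a i - b i else 0)
      = (∑ᶠ i : ℤ, (if i ≤ l then a i else 0))
        - ∑ᶠ i : ℤ, (if i ≤ l then b i else 0) := by
  classical
  set T : Finset ℤ := ha.toFinset ∪ hb.toFinset with hT
  have hTc : (T : Set ℤ) = support a ∪ support b := by simp [hT]
  have hsa : support a ⊆ (T : Set ℤ) := by rw [hTc]; exact Set.subset_union_left
  have hsb : support b ⊆ (T : Set ℤ) := by rw [hTc]; exact Set.subset_union_right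
  have hsab : support (fun i => a i - b i) ⊆ (T : Set ℤ) := by
    rw [hTc]
    intro i hi
    simp only [mem_support, ne_eq] at hi
    by_contra hc
    simp only [Set.mem_union, mem_support, ne_eq, not_or, not_not] at hc
    exact hi (by rw [hc.1, hc.2]; ring)
  rw [finsum_eq_finset_sum_of_support_subset _ ((if_support_subset _ _).trans hsab),
      finsum_eq_finset_sum_of_support_subset _ ((if_support_subset a _).trans hsa),
      finsum_eq_finset_sum_of_support_subset _ ((if_support_subset b _).trans hsb),
      ← Finset.sum_sub_distrib]
  apply Finset.sum_congr rfl
  intro i _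
  split <;> simp

/-- Lemma 5.1.1, (1) ⇔ (2): for finitely supported integer sequences
`(a i)`, `(b i)` with `q i = a i - b i` not identically zero and lowest nonzero term
`q σ · t^σ`, conditions (1) and (2) below are equivalent. -/
theorem theoremC_conditions_equivalent
    (a b : ℤ → ℤ)
    (hafin : (Function.support a).Finite) (hbfin : (Function.support b).Finite)
    (q : ℤ → ℤ) (hq : ∀ i : ℤ, q i = a i - b i)
    (σ : ℤ) (hσ : q σ ≠ 0) (hσmin : ∀ i : ℤ, i < σ → q i = 0) :
    -- Condition (1)
    ((∀ l : ℤ, l < σ → a l = 0) ∧ a σ = q σ ∧ 0 < q σ ∧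
      ∀ l : ℤ, σ < l →
        max (q l) 0 ≤ a l ∧ a l < ∑ᶠ i : ℤ, (if i ≤ l then q i else 0)) ↔
    -- Condition (2)
    ((∀ i : ℤ, 0 ≤ a i) ∧ (∀ i : ℤ, 0 ≤ b i) ∧
      ∃ τ : ℤ, a τ ≠ 0 ∧ (∀ i : ℤ, i < τ → a i = 0) ∧
        (∀ i : ℤ, i ≤ τ → b i = 0) ∧
        ∀ l : ℤ, τ < l →
          (∑ᶠ i : ℤ, (if i ≤ l then b i else 0)) <
            ∑ᶠ i : ℤ, (if i < l then a i else 0)) := by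
  -- Key identity: ∑_{i≤l} q i = ∑_{i<l} a i + a l - ∑_{i≤l} b i
  have hQ : ∀ l : ℤ, (∑ᶠ i : ℤ, (if i ≤ l then q i else 0))
      = (∑ᶠ i : ℤ, (if i < l then a i else 0)) + a l
        - ∑ᶠ i : ℤ, (if i ≤ l then b i else 0) := by
    intro l
    have h1 : (∑ᶠ i : ℤ, (if i ≤ l then q i else 0))
        = ∑ᶠ i : ℤ, (if i ≤ l then a i - b i else 0) :=
      finsum_congr fun i => by rw [hq i]
    rw [h1, finsum_le_sub a b hafin hbfin l, finsum_le_eq a hafin l]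
  constructor
  · rintro ⟨h1, h2, h3, h4⟩
    have haneg : ∀ i : ℤ, 0 ≤ a i := by
      intro i
      rcases lt_trichotomy i σ with h | h | h
      · rw [h1 i h]
      · rw [h, h2]; exact h3.le
      · exact le_trans (le_max_right _ _) (h4 i h).1
    have hbneg : ∀ i : ℤ, 0 ≤ b i := by
      intro i
      have hb : b i = a i - q i := by rw [hq i]; ring
      rcases lt_trichotomy i σ with h | h | h
      · rw [hb, h1 i h, hσmin i h]; norm_num
      · rw [hb, h, h2]; simp
      · rw [hb]
        have := le_trans (le_max_left _ _) (h4 i h).1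
        omega
    refine ⟨haneg, hbneg, σ, ?_, h1, ?_, ?_⟩
    · rw [h2]; exact hσ
    · intro i hi
      rcases lt_or_eq_of_le hi with h | h
      · have hb : b i = a i - q i := by rw [hq i]; ring
        rw [hb, h1 i h, hσmin i h]; norm_num
      · have hb : b i = a i - q i := by rw [hq i]; ring
        rw [hb, h, h2]; ring
    · intro l hl
      have := (h4 l hl).2
      rw [hQ l] at this
      omega
  · rintro ⟨haneg, hbneg, τ, hτa, hτ1, hτ2, hτ3⟩
    -- first show τ = σ
    have hqτ : q τ = a τ := by rw [hq τ, hτ2 τ le_rfl]; ring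
    have hτσ : τ = σ := by
      rcases lt_trichotomy τ σ with h | h | h
      · exact absurd (hσmin τ h) (by rw [hqτ]; exact hτa)
      · exact h
      · have : q σ = 0 := by
          rw [hq σ, hτ1 σ h, hτ2 σ h.le]; norm_num
        exact absurd this hσ
    subst hτσ
    have h2 : a τ = q τ := hqτ.symm
    refine ⟨hτ1, h2, ?_, ?_⟩
    · rw [← h2]
      rcases lt_or_eq_of_le (haneg τ) with h | h
      · exact h
      · exact absurd h.symm hτa
    · intro l hl
      constructor
      · have : q l ≤ a l := by rw [hq l]; have := hbneg l; omega
        exact max_le this (haneg l)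
      · have := hτ3 l hl
        rw [hQ l]
        omega
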